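/- For all n ≥ 1, (n-1) p_n(n) = n p_n(n-1). -/

import Mathlib

noncomputable def p : ℕ → ℤ → ℤ
  | 0, k => if k = 0 then 1 else 0
  | n + 1, k => ∑ j ∈ Finset.Icc (-(n : ℤ)) (n : ℤ), |j - k| * p n j

lemma sum_neg_Icc (m : ℤ) (f : ℤ → ℤ) :
    ∑ j ∈ Finset.Icc (-m) m, f (-j) = ∑ j ∈ Finset.Icc (-m) m, f j := by
  apply Finset.sum_nbij' (fun j => -j) (fun j => -j) <;>
    intros <;> simp_all [Finset.mem_Icc] <;> omega

lemma p_neg (n : ℕ) (k : ℤ) : p n (-k) = p n k := by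
  induction n generalizing k with
  | zero => simp [p, neg_eq_zero]
  | succ n ih =>
    show (∑ j ∈ Finset.Icc (-(n : ℤ)) (n : ℤ), |j - (-k)| * p n j)
      = ∑ j ∈ Finset.Icc (-(n : ℤ)) (n : ℤ), |j - k| * p n j
    rw [← sum_neg_Icc (n : ℤ) (fun j => |j - k| * p n j)]
    refine Finset.sum_congr rfl fun j _ => ?_
    rw [ih]
    congr 1
    rw [abs_sub_comm (-j) k]
    ring_nf

lemma sum_jp (n : ℕ) : ∑ j ∈ Finset.Icc (-(n : ℤ)) (n : ℤ), j * p n j = 0 := by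
  have h := sum_neg_Icc (n : ℤ) (fun j => j * p n j)
  simp only [p_neg, neg_mul] at h
  rw [Finset.sum_neg_distrib] at h
  linarith

theorem p_edge (n : ℕ) (hn : 1 ≤ n) :
    ((n : ℤ) - 1) * p n (n : ℤ) = (n : ℤ) * p n ((n : ℤ) - 1) := by
  obtain ⟨m, rfl⟩ : ∃ m, n = m + 1 := ⟨n - 1, by omega⟩
  have key : ∀ k : ℤ, (m : ℤ) ≤ k →
      (∑ j ∈ Finset.Icc (-(m : ℤ)) (m : ℤ), |j - k| * p m j)
        = k * (∑ j ∈ Finset.Icc (-(m : ℤ)) (m : ℤ), p m j) := by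
    intro k hk
    have : ∀ j ∈ Finset.Icc (-(m : ℤ)) (m : ℤ), |j - k| * p m j
        = k * p m j - j * p m j := by
      intro j hj
      rw [Finset.mem_Icc] at hj
      rw [abs_of_nonpos (by omega)]
      ring
    rw [Finset.sum_congr rfl this, Finset.sum_sub_distrib, sum_jp, sub_zero,
      Finset.mul_sum]
  have e1 : p (m + 1) ((m + 1 : ℕ) : ℤ)
      = ((m + 1 : ℕ) : ℤ) * (∑ j ∈ Finset.Icc (-(m : ℤ)) (m : ℤ), p m j) := by
    show (∑ j ∈ Finset.Icc (-(m : ℤ)) (m : ℤ), |j - ((m + 1 : ℕ) : ℤ)| * p m j) = _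
    exact key _ (by push_cast; omega)
  have e2 : p (m + 1) (((m + 1 : ℕ) : ℤ) - 1)
      = (((m + 1 : ℕ) : ℤ) - 1) * (∑ j ∈ Finset.Icc (-(m : ℤ)) (m : ℤ), p m j) := by
    show (∑ j ∈ Finset.Icc (-(m : ℤ)) (m : ℤ), |j - (((m + 1 : ℕ) : ℤ) - 1)| * p m j) = _
    exact key _ (by push_cast; omega)
  rw [e1, e2]; ring
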